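/- Let Φ be a pure state on H_{A'} ⊗ H_{B'} and ρ any density matrix on H_A ⊗ H_B. If there exist quantum channels Λ_A : L(H_A) → L(H_{A'}) and Λ_B : L(H_B) → L(H_{B'}) with (Λ_A ⊗ Λ_B)(ρ) = Φ, then there exist Hilbert spaces H_{A''}, H_{B''}, isometries V_X : H_X → H_{X'} ⊗ H_{X''} (X ∈ {A, B}), and a state σ on H_{A''} ⊗ H_{B''} such that (V_A ⊗ V_B) ρ (V_A ⊗ V_B)† = Φ ⊗ σ. -/

import Mathlib

open Matrix ComplexOrder Kronecker

/-- A density matrix: positive semidefinite with unit trace. -/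
def IsDensity {n : Type*} [Fintype n] [DecidableEq n] (ρ : Matrix n n ℂ) : Prop :=
  ρ.PosSemidef ∧ ρ.trace = 1

/-- A completely positive trace-preserving map (Choi-matrix formulation of CP). -/
def IsCPTP {m n : Type*} [Fintype m] [DecidableEq m] [Fintype n] [DecidableEq n]
    (Λ : Matrix m m ℂ →ₗ[ℂ] Matrix n n ℂ) : Prop :=
  (Matrix.PosSemidef (Matrix.of fun (p q : m × n) =>
      Λ (Matrix.single p.1 q.1 1) p.2 q.2)) ∧
  ∀ ρ : Matrix m m ℂ, (Λ ρ).trace = ρ.trace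

/-- The tensor product `Λ_A ⊗ Λ_B` of two linear maps on matrix spaces, applied to a
bipartite matrix. -/
noncomputable def tensorMap {a b a' b' : Type*}
    [Fintype a] [DecidableEq a] [Fintype b] [DecidableEq b]
    [Fintype a'] [DecidableEq a'] [Fintype b'] [DecidableEq b']
    (ΛA : Matrix a a ℂ →ₗ[ℂ] Matrix a' a' ℂ) (ΛB : Matrix b b ℂ →ₗ[ℂ] Matrix b' b' ℂ)
    (ρ : Matrix (a × b) (a × b) ℂ) : Matrix (a' × b') (a' × b') ℂ :=
  ∑ i, ∑ j, ∑ k, ∑ l, ρ (i, k) (j, l) •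
    (ΛA (Matrix.single i j 1)) ⊗ₖ (ΛB (Matrix.single k l 1))

open scoped MatrixOrder Matrix.Norms.L2Operator in
lemma Matrix.posSemidef_iff_eq_transpose_mul_self {n : Type*} [Fintype n] [DecidableEq n]
    {A : Matrix n n ℂ} : A.PosSemidef ↔ ∃ B : Matrix n n ℂ, A = Bᴴ * B := by
  constructor
  · intro hA
    obtain ⟨B, hB⟩ := CStarAlgebra.nonneg_iff_eq_star_mul_self.mp hA.nonneg
    exact ⟨B, hB⟩
  · rintro ⟨B, rfl⟩
    exact posSemidef_conjTranspose_mul_self B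

/-- If local channels extract a perfect copy of a pure state `Φ` from `ρ`, then there
exist local isometries `V_A, V_B` and an auxiliary state `σ` with
`(V_A ⊗ V_B) ρ (V_A ⊗ V_B)† = Φ ⊗ σ`. -/
lemma psd_trace_zero {n : Type*} [Fintype n] [DecidableEq n] {Y : Matrix n n ℂ}
    (h : Y.PosSemidef) (ht : Y.trace = 0) : Y = 0 := by
  obtain ⟨B, rfl⟩ := (Matrix.posSemidef_iff_eq_transpose_mul_self).mp h
  suffices hB : B = 0 by simp [hB]
  have hsum : ∑ j : n, ∑ i : n, star (B i j) * B i j = 0 := by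
    rw [← ht]
    simp [Matrix.trace, Matrix.diag, Matrix.mul_apply, Matrix.conjTranspose_apply]
  have h1 := (Finset.sum_eq_zero_iff_of_nonneg (s := Finset.univ)
    (f := fun j => ∑ i : n, star (B i j) * B i j)
    (fun j _ => Finset.sum_nonneg (fun i _ => star_mul_self_nonneg (B i j)))).mp hsum
  ext i j
  have h2 := (Finset.sum_eq_zero_iff_of_nonneg (s := Finset.univ)
    (f := fun i => star (B i j) * B i j)
    (fun i _ => star_mul_self_nonneg (B i j))).mp (h1 j (Finset.mem_univ j)) i (Finset.mem_univ i)
  rw [Complex.star_def, Complex.normSq_eq_conj_mul_self.symm] at h2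
  simpa using Complex.normSq_eq_zero.mp (by exact_mod_cast h2)

lemma pure_rank_one {n : Type*} [Fintype n] [DecidableEq n] {Φ : Matrix n n ℂ}
    (h : Φ.PosSemidef) (htr : Φ.trace = 1) (hpure : Φ * Φ = Φ) :
    ∃ v : n → ℂ, ∀ x y, Φ x y = v x * star (v y) := by
  classical
  have hH := h.isHermitian
  set U : Matrix n n ℂ := (hH.eigenvectorUnitary : Matrix n n ℂ) with hU
  set f : n → ℂ := RCLike.ofReal ∘ hH.eigenvalues with hf
  have hspec : Φ = U * diagonal f * star U := hH.spectral_theorem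
  have hUU : star U * U = 1 := Unitary.coe_star_mul_self hH.eigenvectorUnitary
  have hUU' : U * star U = 1 := Unitary.coe_mul_star_self hH.eigenvectorUnitary
  have hdiag : star U * Φ * U = diagonal f := by
    have := hH.conjStarAlgAut_star_eigenvectorUnitary
    rwa [Unitary.conjStarAlgAut_star_apply] at this
  have hD2 : diagonal f * diagonal f = diagonal f := by
    calc diagonal f * diagonal f = (star U * Φ * U) * (star U * Φ * U) := by rw [hdiag]
      _ = star U * (Φ * (U * star U) * Φ) * U := by noncomm_ring
      _ = star U * (Φ * Φ) * U := by rw [hUU', mul_one]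
      _ = diagonal f := by rw [hpure, hdiag]
  have hval : ∀ i, f i = 0 ∨ f i = 1 := by
    intro i
    have h1 := congrFun (congrFun hD2 i) i
    simp [diagonal_mul_diagonal, diagonal_apply_eq] at h1
    have h' : f i * (f i - 1) = 0 := by
      have : f i * f i = f i := h1
      ring_nf
      linear_combination this
    rcases mul_eq_zero.mp h' with h0 | h1'
    · exact Or.inl h0
    · exact Or.inr (sub_eq_zero.mp h1')
  have htrf : ∑ i, f i = 1 := by
    have : Φ.trace = (diagonal f).trace := by
      rw [hspec, Matrix.trace_mul_cycle, hUU, one_mul]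
    rw [htr, trace_diagonal] at this
    exact this.symm
  have e2 : ∑ i ∈ Finset.univ.filter (fun i => ¬ f i = 1), f i = 0 := by
    apply Finset.sum_eq_zero
    intro i hi
    rcases hval i with h0 | h1
    · exact h0
    · exact absurd h1 (Finset.mem_filter.mp hi).2
  have e1 : ∑ i ∈ Finset.univ.filter (fun i => f i = 1), f i
      = ((Finset.univ.filter (fun i => f i = 1)).card : ℂ) := by
    rw [Finset.sum_congr rfl (fun i hi => (Finset.mem_filter.mp hi).2)]
    simp
  have hsumf : ∑ i ∈ Finset.univ.filter (fun i => f i = 1), f i = 1 := by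
    rw [← Finset.sum_filter_add_sum_filter_not Finset.univ (fun i => f i = 1) f] at htrf
    rwa [e2, add_zero] at htrf
  have hcard : (Finset.univ.filter (fun i => f i = 1)).card = 1 := by
    rw [e1] at hsumf
    exact_mod_cast hsumf
  obtain ⟨i0, hi0⟩ := Finset.card_eq_one.mp hcard
  have hfi0 : f i0 = 1 := by
    have : i0 ∈ Finset.univ.filter (fun i => f i = 1) := hi0 ▸ Finset.mem_singleton_self i0
    exact (Finset.mem_filter.mp this).2
  have hfother : ∀ j, j ≠ i0 → f j = 0 := by
    intro j hj
    rcases hval j with h0 | h1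
    · exact h0
    · exfalso
      have : j ∈ Finset.univ.filter (fun i => f i = 1) :=
        Finset.mem_filter.mpr ⟨Finset.mem_univ j, h1⟩
      rw [hi0, Finset.mem_singleton] at this
      exact hj this
  refine ⟨fun x => U x i0, fun x y => ?_⟩
  have hxy : Φ x y = ∑ p, U x p * f p * star (U y p) := by
    conv_lhs => rw [hspec, Matrix.mul_apply]
    refine Finset.sum_congr rfl fun p _ => ?_
    rw [Matrix.mul_diagonal, Matrix.star_apply]
  rw [hxy, Finset.sum_eq_single i0]
  · rw [hfi0]; ring
  · intro b _ hb
    rw [hfother b hb]; ring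
  · intro hmem; exact absurd (Finset.mem_univ i0) hmem

lemma sandwich {n : Type*} [Fintype n] [DecidableEq n] {Φ : Matrix n n ℂ} {v : n → ℂ}
    (hv : ∀ x y, Φ x y = v x * star (v y)) (M : Matrix n n ℂ) :
    Φ * M * Φ = (Φ * M).trace • Φ := by
  ext a c
  simp only [Matrix.mul_apply, Matrix.trace, Matrix.diag, Matrix.smul_apply, smul_eq_mul, hv,
    Finset.sum_mul]
  refine Finset.sum_congr rfl fun x _ => ?_
  refine Finset.sum_congr rfl fun y _ => ?_
  ring

section helpers
set_option linter.unusedSectionVars false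
variable {s a : Type*} [Fintype s] [DecidableEq s] [Fintype a] [DecidableEq a]

lemma kron_one_mul_apply (Q : Matrix s s ℂ) (W : Matrix (s × a) (s × a) ℂ)
    (x : s) (k : a) (q : s × a) :
    ((Q ⊗ₖ (1 : Matrix a a ℂ)) * W) (x, k) q = ∑ y, Q x y * W (y, k) q := by
  rw [Matrix.mul_apply, Fintype.sum_prod_type]
  simp only [kroneckerMap_apply, Matrix.one_apply]
  refine Finset.sum_congr rfl fun y _ => ?_
  rw [Finset.sum_eq_single k]
  · simp
  · intro l _ hl
    simp [Ne.symm hl]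
  · simp
lemma mul_kron_one_apply (Q : Matrix s s ℂ) (W : Matrix (s × a) (s × a) ℂ)
    (x : s) (k : a) (q : s × a) :
    (W * (Q ⊗ₖ (1 : Matrix a a ℂ))) q (x, k) = ∑ y, W q (y, k) * Q y x := by
  rw [Matrix.mul_apply, Fintype.sum_prod_type]
  simp only [kroneckerMap_apply, Matrix.one_apply]
  refine Finset.sum_congr rfl fun y _ => ?_
  rw [Finset.sum_eq_single k]
  · simp
  · intro l _ hl
    simp [hl]
  · simp


lemma factorize {Φ : Matrix s s ℂ} {W : Matrix (s × a) (s × a) ℂ}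
    (hΦ : Φ.PosSemidef) (htr : Φ.trace = 1) (hpure : Φ * Φ = Φ)
    (hW : W.PosSemidef)
    (hptr : ∀ x y, (∑ k, W (x, k) (y, k)) = Φ x y) :
    ∃ σ : Matrix a a ℂ, σ.PosSemidef ∧ σ.trace = 1 ∧ W = Φ ⊗ₖ σ := by
  classical
  obtain ⟨v, hv⟩ := pure_rank_one hΦ htr hpure
  set Q : Matrix s s ℂ := 1 - Φ with hQdef
  have hQΦ : Q * Φ = 0 := by rw [hQdef, sub_mul, one_mul, hpure, sub_self]
  have hQH : Qᴴ = Q := by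
    rw [hQdef, conjTranspose_sub, conjTranspose_one, hΦ.isHermitian]
  set Q' : Matrix (s × a) (s × a) ℂ := Q ⊗ₖ (1 : Matrix a a ℂ) with hQ'def
  have hQ'H : Q'ᴴ = Q' := by
    ext ⟨x, k⟩ ⟨y, l⟩
    have h1 : star (Q y x) = Q x y := by
      have := congrFun (congrFun hQH x) y
      rwa [Matrix.conjTranspose_apply] at this
    simp only [hQ'def, Matrix.conjTranspose_apply, kroneckerMap_apply, Matrix.one_apply,
      star_mul', h1]
    by_cases h : k = l <;> simp [h]
    · intro h'; exact (h (h'.symm)).elim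
  -- trace of Q' W Q' is zero
  have hYtr : (Q' * W * Q').trace = 0 := by
    have h1 : ∀ (x : s) (k : a), (Q' * W * Q') (x, k) (x, k)
        = ∑ y, Q x y * ((W * Q') (y, k) (x, k)) := by
      intro x k
      rw [mul_assoc, hQ'def]
      exact kron_one_mul_apply Q (W * Q') x k (x, k)
    have h2 : ∀ (y x : s) (k : a), (W * Q') (y, k) (x, k) = ∑ z, W (y, k) (z, k) * Q z x := by
      intro y x k
      rw [hQ'def]
      exact mul_kron_one_apply Q W x k (y, k)
    have h3 : (Q' * W * Q').trace = ∑ x, ∑ k, (Q' * W * Q') (x, k) (x, k) := by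
      rw [Matrix.trace, Fintype.sum_prod_type]; rfl
    rw [h3]
    simp only [h1, h2]
    have h4 : ∀ x : s, ∑ k, ∑ y, Q x y * (∑ z, W (y,k) (z,k) * Q z x) = 0 := by
      intro x
      rw [Finset.sum_comm]
      have h5 : ∀ y, ∑ k, Q x y * (∑ z, W (y,k) (z,k) * Q z x)
          = ∑ z, Q x y * (Φ y z * Q z x) := by
        intro y
        rw [← Finset.mul_sum, ← Finset.mul_sum]
        congr 1
        rw [Finset.sum_comm]
        refine Finset.sum_congr rfl fun z _ => ?_
        rw [← Finset.sum_mul, hptr]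
      simp only [h5]
      rw [Finset.sum_comm]
      have h6 : ∀ z, ∑ y, Q x y * (Φ y z * Q z x) = 0 := by
        intro z
        have : ∑ y, Q x y * Φ y z = 0 := by
          have := congrFun (congrFun hQΦ x) z
          rw [Matrix.mul_apply] at this
          simpa using this
        calc ∑ y, Q x y * (Φ y z * Q z x) = (∑ y, Q x y * Φ y z) * Q z x := by
              rw [Finset.sum_mul]; exact Finset.sum_congr rfl fun y _ => by ring
          _ = 0 := by rw [this, zero_mul]
      simp only [h6]
      simp
    simp only [h4]
    simp
  have hYpsd : (Q' * W * Q').PosSemidef := by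
    have := hW.mul_mul_conjTranspose_same Q'
    rwa [hQ'H] at this
  have hY0 : Q' * W * Q' = 0 := psd_trace_zero hYpsd hYtr
  obtain ⟨B, hB⟩ := Matrix.posSemidef_iff_eq_transpose_mul_self.mp hW
  have hBQ' : B * Q' = 0 := by
    apply Matrix.conjTranspose_mul_self_eq_zero.mp
    calc (B * Q')ᴴ * (B * Q') = Q'ᴴ * (Bᴴ * B) * Q' := by
          rw [Matrix.conjTranspose_mul]; noncomm_ring
      _ = Q' * W * Q' := by rw [← hB, hQ'H]
      _ = 0 := hY0
  have hWQ' : W * Q' = 0 := by rw [hB, mul_assoc, hBQ', mul_zero]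
  have hQ'W : Q' * W = 0 := by
    have h0 : (W * Q')ᴴ = 0 := by rw [hWQ', conjTranspose_zero]
    rwa [Matrix.conjTranspose_mul, hQ'H, hW.isHermitian] at h0
  have hQ'eq : Q' = 1 - Φ ⊗ₖ (1 : Matrix a a ℂ) := by
    ext ⟨x, k⟩ ⟨y, l⟩
    simp only [hQ'def, hQdef, kroneckerMap_apply, Matrix.sub_apply, Matrix.one_apply,
      Prod.mk.injEq]
    by_cases h : k = l <;> by_cases h2 : x = y <;> simp [h, h2]
  have hWΦ' : W * (Φ ⊗ₖ (1 : Matrix a a ℂ)) = W := by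
    have := hWQ'
    rw [hQ'eq, mul_sub, mul_one, sub_eq_zero] at this
    exact this.symm
  have hΦ'W : (Φ ⊗ₖ (1 : Matrix a a ℂ)) * W = W := by
    have := hQ'W
    rw [hQ'eq, sub_mul, one_mul, sub_eq_zero] at this
    exact this.symm
  have hWsand : (Φ ⊗ₖ (1 : Matrix a a ℂ)) * W * (Φ ⊗ₖ (1 : Matrix a a ℂ)) = W := by
    rw [hΦ'W, hWΦ']
  set σ : Matrix a a ℂ :=
    Matrix.of (fun k m => (Φ * Matrix.of (fun x y => W (x, k) (y, m))).trace) with hσdef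
  have hWfact : W = Φ ⊗ₖ σ := by
    ext ⟨x, k⟩ ⟨y, m⟩
    conv_lhs => rw [← hWsand]
    set M : Matrix s s ℂ := Matrix.of (fun u w => W (u, k) (w, m)) with hMdef
    have e1 : ((Φ ⊗ₖ (1 : Matrix a a ℂ)) * W * (Φ ⊗ₖ (1 : Matrix a a ℂ))) (x,k) (y,m)
        = ∑ w, ((Φ ⊗ₖ (1 : Matrix a a ℂ)) * W) (x,k) (w,m) * Φ w y :=
      mul_kron_one_apply Φ ((Φ ⊗ₖ (1 : Matrix a a ℂ)) * W) y m (x, k)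
    have e2 : ∀ w, ((Φ ⊗ₖ (1 : Matrix a a ℂ)) * W) (x,k) (w,m) = ∑ u, Φ x u * W (u,k) (w,m) :=
      fun w => kron_one_mul_apply Φ W x k (w, m)
    have e3 : (Φ * M * Φ) x y = ∑ w, (∑ u, Φ x u * M u w) * Φ w y := by
      rw [Matrix.mul_apply]
      exact Finset.sum_congr rfl fun w _ => by rw [Matrix.mul_apply]
    have e4 := congrFun (congrFun (sandwich hv M) x) y
    rw [e1]
    simp only [e2]
    rw [show (∑ w, (∑ u, Φ x u * W (u,k) (w,m)) * Φ w y) = (Φ * M * Φ) x y from (e3).symm, e4]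
    simp only [Matrix.smul_apply, smul_eq_mul, kroneckerMap_apply, hσdef, Matrix.of_apply]
    ring
  have hσptr : ∀ k m, σ k m = ∑ x, W (x, k) (x, m) := by
    intro k m
    have : ∑ x, W (x, k) (x, m) = ∑ x, Φ x x * σ k m := by
      refine Finset.sum_congr rfl fun x _ => ?_
      rw [hWfact]; rfl
    rw [this, ← Finset.sum_mul]
    have : ∑ x, Φ x x = 1 := htr
    rw [this, one_mul]
  have hWherm : ∀ p q, star (W q p) = W p q := by
    intro p q
    have := congrFun (congrFun hW.isHermitian p) q
    rwa [Matrix.conjTranspose_apply] at this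
  refine ⟨σ, Matrix.PosSemidef.of_dotProduct_mulVec_nonneg ?_ ?_, ?_, hWfact⟩
  · -- IsHermitian σ
    ext k m
    rw [Matrix.conjTranspose_apply, hσptr, hσptr]
    rw [star_sum]
    exact Finset.sum_congr rfl fun x _ => hWherm (x, k) (x, m)
  · -- quadratic form
    intro z
    set y : s → (s × a → ℂ) := fun x p => if p.1 = x then z p.2 else 0 with hy
    have rhs1 : ∀ x : s, (star (y x) ⬝ᵥ W *ᵥ (y x))
        = ∑ k, ∑ m, star (z k) * (W (x,k) (x,m) * z m) := by
      intro x
      have collapse_u : ∀ (t : s) (k : a),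
          (∑ u, ∑ m, W (t,k) (u,m) * (if u = x then z m else 0))
            = ∑ m, W (t,k) (x,m) * z m := by
        intro t k
        rw [Finset.sum_eq_single x]
        · simp
        · intro b _ hb
          exact Finset.sum_eq_zero fun m _ => by simp [hb]
        · simp
      have step1 : (∑ t, ∑ k, star (if t = x then z k else 0)
            * (∑ u, ∑ m, W (t,k) (u,m) * (if u = x then z m else 0)))
          = ∑ k, star (z k) * (∑ m, W (x,k) (x,m) * z m) := by
        rw [Fintype.sum_eq_single x (fun b hb => Finset.sum_eq_zero fun k _ => by simp [hb])]
        refine Finset.sum_congr rfl fun k _ => ?_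
        rw [if_pos rfl, collapse_u]
      simpa only [dotProduct, mulVec, Pi.star_apply, Fintype.sum_prod_type, hy,
        Finset.mul_sum] using step1
    have lhs1 : star z ⬝ᵥ σ *ᵥ z = ∑ k, ∑ m, ∑ x, star (z k) * (W (x,k) (x,m) * z m) := by
      simp only [dotProduct, mulVec, Pi.star_apply]
      simp only [hσptr, Finset.sum_mul, Finset.mul_sum]
    have key : star z ⬝ᵥ σ *ᵥ z = ∑ x, (star (y x) ⬝ᵥ W *ᵥ (y x)) := by
      rw [lhs1]
      calc ∑ k, ∑ m, ∑ x, star (z k) * (W (x,k) (x,m) * z m)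
          = ∑ k, ∑ x, ∑ m, star (z k) * (W (x,k) (x,m) * z m) :=
            Finset.sum_congr rfl fun k _ => Finset.sum_comm
        _ = ∑ x, ∑ k, ∑ m, star (z k) * (W (x,k) (x,m) * z m) := Finset.sum_comm
        _ = ∑ x, (star (y x) ⬝ᵥ W *ᵥ (y x)) :=
            Finset.sum_congr rfl fun x _ => (rhs1 x).symm
    rw [key]
    exact Finset.sum_nonneg fun x _ => hW.dotProduct_mulVec_nonneg _
  · -- trace
    have : σ.trace = ∑ k, ∑ x, W (x,k) (x,k) := by
      rw [Matrix.trace]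
      exact Finset.sum_congr rfl fun k _ => hσptr k k
    rw [this, Finset.sum_comm]
    simp only [hptr]
    exact htr

end helpers

lemma stinespring {d d' : ℕ}
    (Λ : Matrix (Fin d) (Fin d) ℂ →ₗ[ℂ] Matrix (Fin d') (Fin d') ℂ) (hΛ : IsCPTP Λ) :
    ∃ V : Matrix (Fin d' × Fin (d * d')) (Fin d) ℂ,
      Vᴴ * V = 1 ∧
      ∀ i j i' j', ∑ k, V (i', k) i * star (V (j', k) j)
          = Λ (Matrix.single i j 1) i' j' := by
  classical
  set C : Matrix (Fin d × Fin d') (Fin d × Fin d') ℂ :=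
    Matrix.of fun p q => Λ (Matrix.single p.1 q.1 1) p.2 q.2 with hC
  obtain ⟨B, hB⟩ := Matrix.posSemidef_iff_eq_transpose_mul_self.mp hΛ.1
  set e : Fin d × Fin d' ≃ Fin (d * d') := finProdFinEquiv with he
  set V : Matrix (Fin d' × Fin (d * d')) (Fin d) ℂ :=
    Matrix.of (fun p i => star (B (e.symm p.2) (i, p.1))) with hV
  have hkey : ∀ i j i' j', ∑ k, V (i', k) i * star (V (j', k) j)
      = Λ (Matrix.single i j 1) i' j' := by
    intro i j i' j'
    have : ∑ k, V (i', k) i * star (V (j', k) j)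
        = ∑ q : Fin d × Fin d', star (B q (i, i')) * B q (j, j') := by
      rw [← Equiv.sum_comp e (fun k => V (i', k) i * star (V (j', k) j))]
      refine Finset.sum_congr rfl fun q _ => ?_
      simp [hV, Equiv.symm_apply_apply]
    rw [this]
    have : (Bᴴ * B) (i, i') (j, j') = C (i, i') (j, j') := by rw [← hB]
    rw [Matrix.mul_apply] at this
    simp only [Matrix.conjTranspose_apply] at this
    rw [this]
    rfl
  refine ⟨V, ?_, hkey⟩
  ext i j
  have : (Vᴴ * V) i j = ∑ p : Fin d' × Fin (d * d'), star (V p i) * V p j := by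
    rw [Matrix.mul_apply]
    exact Finset.sum_congr rfl fun p _ => by rw [Matrix.conjTranspose_apply]
  rw [this, Fintype.sum_prod_type]
  have : ∀ i' : Fin d', ∑ k, star (V (i', k) i) * V (i', k) j
      = star (Λ (Matrix.single i j 1) i' i') := by
    intro i'
    rw [← hkey i j i' i']
    rw [star_sum]
    refine Finset.sum_congr rfl fun k _ => ?_
    rw [star_mul', star_star]
  simp only [this]
  rw [← star_sum]
  have htr : ∑ i', Λ (Matrix.single i j 1) i' i'
      = (Λ (Matrix.single i j 1)).trace := rfl
  rw [htr, hΛ.2]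
  by_cases hij : i = j
  · subst hij
    simp
  · rw [Matrix.trace_single_eq_of_ne i j 1 hij]
    simp [Matrix.one_apply, hij]

theorem channel_to_isometry {dA dB dA' dB' : ℕ}
    (Φ : Matrix (Fin dA' × Fin dB') (Fin dA' × Fin dB') ℂ)
    (hΦ : IsDensity Φ) (hpure : Φ * Φ = Φ)
    (ρ : Matrix (Fin dA × Fin dB) (Fin dA × Fin dB) ℂ) (hρ : IsDensity ρ)
    (ΛA : Matrix (Fin dA) (Fin dA) ℂ →ₗ[ℂ] Matrix (Fin dA') (Fin dA') ℂ)
    (ΛB : Matrix (Fin dB) (Fin dB) ℂ →ₗ[ℂ] Matrix (Fin dB') (Fin dB') ℂ)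
    (hA : IsCPTP ΛA) (hB : IsCPTP ΛB)
    (hext : tensorMap ΛA ΛB ρ = Φ) :
    ∃ (dA'' dB'' : ℕ)
      (VA : Matrix (Fin dA' × Fin dA'') (Fin dA) ℂ)
      (VB : Matrix (Fin dB' × Fin dB'') (Fin dB) ℂ)
      (σ : Matrix (Fin dA'' × Fin dB'') (Fin dA'' × Fin dB'') ℂ),
      VAᴴ * VA = 1 ∧ VBᴴ * VB = 1 ∧ IsDensity σ ∧
      Matrix.reindex
          (Equiv.prodProdProdComm (Fin dA') (Fin dA'') (Fin dB') (Fin dB''))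
          (Equiv.prodProdProdComm (Fin dA') (Fin dA'') (Fin dB') (Fin dB''))
          ((Matrix.kroneckerMap (· * ·) VA VB) * ρ * (Matrix.kroneckerMap (· * ·) VA VB)ᴴ)
        = Φ ⊗ₖ σ := by
  classical
  obtain ⟨VA, hVA1, hPA⟩ := stinespring ΛA hA
  obtain ⟨VB, hVB1, hPB⟩ := stinespring ΛB hB
  set e := Equiv.prodProdProdComm (Fin dA') (Fin (dA * dA')) (Fin dB') (Fin (dB * dB')) with he
  set X := Matrix.kroneckerMap (· * ·) VA VB with hX
  set W := Matrix.reindex e e (X * ρ * Xᴴ) with hWdef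
  have hWpsd : W.PosSemidef := by
    have h1 : (X * ρ * Xᴴ).PosSemidef := hρ.1.mul_mul_conjTranspose_same X
    rw [hWdef, Matrix.reindex_apply]
    exact h1.submatrix _
  have hWapp : ∀ (s t : Fin dA' × Fin dB') (k m : Fin (dA * dA') × Fin (dB * dB')),
      W (s, k) (t, m) = ∑ w : Fin dA × Fin dB, (∑ u : Fin dA × Fin dB,
        (VA (s.1, k.1) u.1 * VB (s.2, k.2) u.2) * ρ u w)
        * star (VA (t.1, m.1) w.1 * VB (t.2, m.2) w.2) := by
    intro s t k m
    rw [hWdef, Matrix.reindex_apply, Matrix.submatrix_apply, Matrix.mul_apply]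
    refine Finset.sum_congr rfl fun w _ => ?_
    rw [Matrix.mul_apply, Matrix.conjTranspose_apply]
    simp only [he, Equiv.prodProdProdComm_symm, Equiv.prodProdProdComm_apply, hX,
      Matrix.kroneckerMap_apply]
  have hfact : ∀ (u w : Fin dA × Fin dB) (a' c' : Fin dA') (b' d' : Fin dB'),
      ∑ k : Fin (dA * dA') × Fin (dB * dB'),
        (VA (a', k.1) u.1 * VB (b', k.2) u.2) * star (VA (c', k.1) w.1 * VB (d', k.2) w.2)
      = ΛA (Matrix.single u.1 w.1 1) a' c' * ΛB (Matrix.single u.2 w.2 1) b' d' := by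
    intro u w a' c' b' d'
    rw [← hPA u.1 w.1 a' c', ← hPB u.2 w.2 b' d', Finset.sum_mul_sum]
    rw [Fintype.sum_prod_type]
    refine Finset.sum_congr rfl fun kA _ => Finset.sum_congr rfl fun kB _ => ?_
    rw [star_mul']
    ring
  have hptr : ∀ s t : Fin dA' × Fin dB', (∑ k, W (s, k) (t, k)) = Φ s t := by
    intro s t
    rw [← hext]
    have hrhs : tensorMap ΛA ΛB ρ s t
        = ∑ i, ∑ j, ∑ kk, ∑ l, ρ (i, kk) (j, l) *
          (ΛA (Matrix.single i j 1) s.1 t.1 * ΛB (Matrix.single kk l 1) s.2 t.2) := by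
      simp [tensorMap, Matrix.sum_apply, Matrix.smul_apply, Matrix.kroneckerMap_apply,
        smul_eq_mul, mul_assoc]
    rw [hrhs]
    calc ∑ k, W (s, k) (t, k)
        = ∑ k : Fin (dA * dA') × Fin (dB * dB'), ∑ w : Fin dA × Fin dB,
            (∑ u : Fin dA × Fin dB, (VA (s.1, k.1) u.1 * VB (s.2, k.2) u.2) * ρ u w)
            * star (VA (t.1, k.1) w.1 * VB (t.2, k.2) w.2) :=
          Finset.sum_congr rfl fun k _ => hWapp s t k k
      _ = ∑ w : Fin dA × Fin dB, ∑ u : Fin dA × Fin dB,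
            ∑ k : Fin (dA * dA') × Fin (dB * dB'),
            ((VA (s.1, k.1) u.1 * VB (s.2, k.2) u.2)
              * star (VA (t.1, k.1) w.1 * VB (t.2, k.2) w.2)) * ρ u w := by
          simp only [Finset.sum_mul]
          rw [Finset.sum_comm]
          refine Finset.sum_congr rfl fun w _ => ?_
          rw [Finset.sum_comm]
          exact Finset.sum_congr rfl fun u _ => Finset.sum_congr rfl fun k _ => by ring
      _ = ∑ w : Fin dA × Fin dB, ∑ u : Fin dA × Fin dB,
            (ΛA (Matrix.single u.1 w.1 1) s.1 t.1
              * ΛB (Matrix.single u.2 w.2 1) s.2 t.2) * ρ u w := by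
          refine Finset.sum_congr rfl fun w _ => Finset.sum_congr rfl fun u _ => ?_
          rw [← Finset.sum_mul, hfact u w s.1 t.1 s.2 t.2]
      _ = ∑ u : Fin dA × Fin dB, ∑ w : Fin dA × Fin dB,
            (ΛA (Matrix.single u.1 w.1 1) s.1 t.1
              * ΛB (Matrix.single u.2 w.2 1) s.2 t.2) * ρ u w := Finset.sum_comm
      _ = ∑ i, ∑ j, ∑ kk, ∑ l, ρ (i, kk) (j, l) *
            (ΛA (Matrix.single i j 1) s.1 t.1
              * ΛB (Matrix.single kk l 1) s.2 t.2) := by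
          simp only [Fintype.sum_prod_type]
          refine Finset.sum_congr rfl fun u1 _ => ?_
          rw [Finset.sum_comm]
          refine Finset.sum_congr rfl fun j _ => Finset.sum_congr rfl fun u2 _ =>
            Finset.sum_congr rfl fun l _ => by ring
  obtain ⟨σ, hσpsd, hσtr, hWfact⟩ := factorize hΦ.1 hΦ.2 hpure hWpsd hptr
  exact ⟨dA * dA', dB * dB', VA, VB, σ, hVA1, hVB1, ⟨hσpsd, hσtr⟩, hWfact⟩
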